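/- Let N ≥ 2 be even. There exists a constant M < ∞, depending only on N and max_i ‖aᵢ‖_{L∞}, with the following property: if u : ℝ × ℝⁿ → ℝ is a smooth global solution of the PDE ∂u/∂t = Δu + P(u) that is bounded on each slab [−T, T] × ℝⁿ (T > 0), then u is bounded from above on all of ℝ^{n+1} with sup_{ℝ^{n+1}} u ≤ M. -/

import Mathlib

open MeasureTheory Filter Topology
open scoped ENNReal

noncomputable section

/-- Euclidean space `ℝⁿ`. -/
abbrev Spc (n : ℕ) := EuclideanSpace ℝ (Fin n)

/-- The Laplacian in the spatial variables. -/
noncomputable def lap {n : ℕ} (f : Spc n → ℝ) (x : Spc n) : ℝ :=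
  ∑ i : Fin n, fderiv ℝ (fun y => fderiv ℝ f y (EuclideanSpace.single i 1)) x
    (EuclideanSpace.single i 1)

/-- The polynomial nonlinearity `P(f)(x) = -f(x)^N + ∑_{i<N} aᵢ(x) f(x)^i`. -/
noncomputable def Pfun {n N : ℕ} (a : Fin N → Spc n → ℝ) (f : Spc n → ℝ) (x : Spc n) : ℝ :=
  -(f x) ^ N + ∑ i : Fin N, a i x * f x ^ (i : ℕ)

/-- The time derivative `∂u/∂t`. -/
noncomputable def timeDeriv {n : ℕ} (u : ℝ × Spc n → ℝ) (t : ℝ) (x : Spc n) : ℝ :=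
  deriv (fun s => u (s, x)) t

/-- `u` is a global solution of `∂u/∂t = Δu + P(u)`. -/
def IsSol {n N : ℕ} (a : Fin N → Spc n → ℝ) (u : ℝ × Spc n → ℝ) : Prop :=
  ∀ t x, timeDeriv u t x = lap (fun y => u (t, y)) x + Pfun a (fun y => u (t, y)) x

/-- `w` is an equilibrium: `Δw + P(w) = 0`. -/
def IsEquilibrium {n N : ℕ} (a : Fin N → Spc n → ℝ) (w : Spc n → ℝ) : Prop :=
  ∀ x, lap w x + Pfun a w x = 0

/-- The energy density `|∂u/∂t|² + |Δu + P(u)|²`. -/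
noncomputable def energyDensity {n N : ℕ} (a : Fin N → Spc n → ℝ) (u : ℝ × Spc n → ℝ)
    (t : ℝ) (x : Spc n) : ℝ :=
  (timeDeriv u t x) ^ 2 + (lap (fun y => u (t, y)) x + Pfun a (fun y => u (t, y)) x) ^ 2

/-- The energy `E(u) = (1/2) ∫_ℝ ∫_{ℝⁿ} (|∂u/∂t|² + |Δu + P(u)|²) dx dt`, valued in `ℝ≥0∞`. -/
noncomputable def energy {n N : ℕ} (a : Fin N → Spc n → ℝ) (u : ℝ × Spc n → ℝ) : ℝ≥0∞ :=
  (1 / 2) * ∫⁻ t : ℝ, ∫⁻ x : Spc n, ENNReal.ofReal (energyDensity a u t x)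

/-- The action density `(1/2)|∇f|² + f^{N+1}/(N+1) - ∑_{i<N} aᵢ f^{i+1}/(i+1)`. -/
noncomputable def actionDensity {n N : ℕ} (a : Fin N → Spc n → ℝ) (f : Spc n → ℝ)
    (x : Spc n) : ℝ :=
  (1 / 2) * ‖gradient f x‖ ^ 2 + f x ^ (N + 1) / (N + 1)
    - ∑ i : Fin N, a i x * f x ^ ((i : ℕ) + 1) / ((i : ℕ) + 1)

/-- The action functional `A(f)`. -/
noncomputable def action {n N : ℕ} (a : Fin N → Spc n → ℝ) (f : Spc n → ℝ) : ℝ :=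
  ∫ x : Spc n, actionDensity a f x

/-- `f` has finite action. -/
def FiniteAction {n N : ℕ} (a : Fin N → Spc n → ℝ) (f : Spc n → ℝ) : Prop :=
  Integrable (actionDensity a f)

/-- The coefficients `aᵢ` are smooth, in `L¹ ∩ L∞`, with all derivatives of all orders
bounded. -/
def GoodCoeffs {n N : ℕ} (a : Fin N → Spc n → ℝ) : Prop :=
  ∀ i, ContDiff ℝ (⊤ : ℕ∞) (a i) ∧ Integrable (a i) ∧
    ∀ k : ℕ, ∃ C : ℝ, ∀ x, ‖iteratedFDeriv ℝ k (a i) x‖ ≤ C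

/-- `u`, `∂u/∂t` and the spatial derivatives of `u` up to order two are bounded by a
constant multiple of `(1+|x|)^{-(n+1)}`, uniformly for `t` in compact intervals. -/
def AdmissibleDecay {n : ℕ} (u : ℝ × Spc n → ℝ) : Prop :=
  ∀ T > (0 : ℝ), ∃ C : ℝ, ∀ t : ℝ, ∀ x : Spc n, |t| ≤ T →
    |u (t, x)| ≤ C * (1 + ‖x‖) ^ (-(n + 1 : ℝ)) ∧
    |timeDeriv u t x| ≤ C * (1 + ‖x‖) ^ (-(n + 1 : ℝ)) ∧
    ‖fderiv ℝ (fun y => u (t, y)) x‖ ≤ C * (1 + ‖x‖) ^ (-(n + 1 : ℝ)) ∧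
    ‖iteratedFDeriv ℝ 2 (fun y => u (t, y)) x‖ ≤ C * (1 + ‖x‖) ^ (-(n + 1 : ℝ))

section AuxLemmas
open Set Filter Topology
variable {n : ℕ}


/-- Derivative at a right-endpoint maximum is nonneg. -/
lemma aux_deriv_nonneg_right {f69 : ℝ → ℝ} {a b : ℝ} (hab : a < b)
    (hd : DifferentiableAt ℝ f69 b) (hmax : ∀ t ∈ Set.Icc a b, f69 t ≤ f69 b) :
    0 ≤ deriv f69 b := by
  have h := hd.hasDerivAt
  have htends : Tendsto (slope f69 b) (𝓝[≠] b) (𝓝 (deriv f69 b)) :=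
    hasDerivAt_iff_tendsto_slope.1 h
  have h2 : Tendsto (slope f69 b) (𝓝[<] b) (𝓝 (deriv f69 b)) :=
    htends.mono_left (nhdsWithin_mono b (fun x hx => ne_of_lt hx))
  have : ∀ᶠ t in 𝓝[<] b, 0 ≤ slope f69 b t := by
    filter_upwards [Ioo_mem_nhdsLT_of_mem (Set.mem_Ioc.2 ⟨hab, le_refl b⟩)] with t ht
    have h1 : f69 t ≤ f69 b := hmax t ⟨le_of_lt ht.1, le_of_lt ht.2⟩
    have h3 : t - b < 0 := sub_neg.2 ht.2
    rw [slope_def_field]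
    exact div_nonneg_of_nonpos (by linarith) h3.le
  exact ge_of_tendsto h2 this


lemma aux_hasDerivAt_line (f : Spc n → ℝ) (hf : Differentiable ℝ f) (x e : Spc n) (s : ℝ) :
    HasDerivAt (fun s : ℝ => f (x + s • e)) (fderiv ℝ f (x + s • e) e) s := by
  have h1 : HasDerivAt (fun s : ℝ => x + s • e) e s := by
    simpa using ((hasDerivAt_id s).smul_const e).const_add x
  exact (hf (x + s • e)).hasFDerivAt.comp_hasDerivAt s h1

lemma aux_deriv_line (f : Spc n → ℝ) (hf : Differentiable ℝ f) (x e : Spc n) :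
    deriv (fun s : ℝ => f (x + s • e)) = fun s => fderiv ℝ f (x + s • e) e := by
  funext s; exact (aux_hasDerivAt_line f hf x e s).deriv

lemma aux_diff_fderiv_apply (f : Spc n → ℝ) (hf : ContDiff ℝ (⊤ : ℕ∞) f) (e : Spc n) :
    Differentiable ℝ (fun y => fderiv ℝ f y e) := by
  have h1 : ContDiff ℝ (⊤ : ℕ∞) (fderiv ℝ f) := hf.fderiv_right (mod_cast le_top)
  exact (h1.clm_apply contDiff_const).differentiable (by simp)

lemma aux_second_line (f : Spc n → ℝ) (hf : ContDiff ℝ (⊤ : ℕ∞) f) (x e : Spc n) :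
    deriv (deriv (fun s : ℝ => f (x + s • e))) 0 = fderiv ℝ (fun y => fderiv ℝ f y e) x e := by
  rw [aux_deriv_line f (hf.differentiable (by simp)) x e]
  have := aux_hasDerivAt_line (fun y => fderiv ℝ f y e) (aux_diff_fderiv_apply f hf e) x e 0
  simpa using this.deriv

lemma aux_secondderiv_test {h : ℝ → ℝ} (hh : ContDiff ℝ (⊤ : ℕ∞) h) (hmax : IsLocalMax h 0) :
    deriv (deriv h) 0 ≤ 0 := by
  by_contra hc
  push_neg at hc
  have hd1 : Differentiable ℝ h := hh.differentiable (by simp)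
  have hc1 : ContDiff ℝ (⊤ : ℕ∞) (deriv h) := (contDiff_infty_iff_deriv.1 hh).2
  have hd2 : Differentiable ℝ (deriv h) := hc1.differentiable (by simp)
  have hc2 : Continuous (deriv (deriv h)) := ((contDiff_infty_iff_deriv.1 hc1).2).continuous
  have hev : ∀ᶠ s in 𝓝 (0 : ℝ), 0 < deriv (deriv h) s :=
    (hc2.tendsto 0).eventually (eventually_gt_nhds hc)
  obtain ⟨ε, hεpos, hball⟩ := Metric.eventually_nhds_iff.1 (hev.and hmax)
  set r := ε / 2 with hr
  have hrpos : 0 < r := by positivity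
  have hrsub : ∀ s ∈ Icc (0:ℝ) r, dist s (0:ℝ) < ε := by
    intro s hs
    rw [Real.dist_eq, sub_zero, abs_of_nonneg hs.1]
    linarith [hs.2]
  have hmono : StrictMonoOn (deriv h) (Icc (0:ℝ) r) := by
    apply strictMonoOn_of_deriv_pos (convex_Icc _ _) hd2.continuous.continuousOn
    intro s hs
    rw [interior_Icc] at hs
    exact (hball (hrsub s ⟨hs.1.le, hs.2.le⟩)).1
  have h0 : deriv h 0 = 0 := hmax.deriv_eq_zero
  have hmono2 : StrictMonoOn h (Icc (0:ℝ) r) := by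
    apply strictMonoOn_of_deriv_pos (convex_Icc _ _) hd1.continuous.continuousOn
    intro s hs
    rw [interior_Icc] at hs
    have := hmono (Set.left_mem_Icc.2 hrpos.le) ⟨hs.1.le, hs.2.le⟩ hs.1
    rwa [h0] at this
  have hlt : h 0 < h r := hmono2 (Set.left_mem_Icc.2 hrpos.le) (Set.right_mem_Icc.2 hrpos.le) hrpos
  have hle : h r ≤ h 0 := (hball (by rw [Real.dist_eq, sub_zero, abs_of_nonneg hrpos.le]; linarith)).2
  linarith

lemma aux_secondDir_nonpos {f : Spc n → ℝ} (hf : ContDiff ℝ (⊤ : ℕ∞) f) {x : Spc n} (e : Spc n)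
    (hmax : IsLocalMax f x) : fderiv ℝ (fun y => fderiv ℝ f y e) x e ≤ 0 := by
  have hline : ContDiff ℝ (⊤ : ℕ∞) (fun s : ℝ => f (x + s • e)) :=
    hf.comp (contDiff_const.add (contDiff_id.smul contDiff_const))
  have hmax0 : IsLocalMax (fun s : ℝ => f (x + s • e)) 0 := by
    have hcont : Continuous (fun s : ℝ => x + s • e) := by continuity
    have htd : Tendsto (fun s : ℝ => x + s • e) (𝓝 0) (𝓝 x) := by
      have := hcont.tendsto 0
      simpa using this
    have hev := htd.eventually hmax
    unfold IsLocalMax IsMaxFilter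
    simpa using hev
  have := aux_secondderiv_test hline hmax0
  rwa [aux_second_line f hf x e] at this

lemma aux_normsq_contDiff : ContDiff ℝ (⊤ : ℕ∞) (fun z : Spc n => ‖z‖ ^ 2) :=
  contDiff_norm_sq ℝ

lemma aux_normsq_second (x e : Spc n) :
    fderiv ℝ (fun y => fderiv ℝ (fun z : Spc n => ‖z‖ ^ 2) y e) x e = 2 * ‖e‖ ^ 2 := by
  rw [← aux_second_line _ aux_normsq_contDiff x e]
  have hfun : (fun s : ℝ => ‖x + s • e‖ ^ 2)
      = fun s => (‖x‖ ^ 2 + ‖e‖ ^ 2 * s ^ 2) + (2 * (inner ℝ x e : ℝ)) * s := by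
    funext s
    rw [norm_add_sq_real, real_inner_smul_right, norm_smul]
    simp [mul_pow]
    ring
  have H1 : ∀ s : ℝ, HasDerivAt (fun s : ℝ => (‖x‖ ^ 2 + ‖e‖ ^ 2 * s ^ 2) + (2 * (inner ℝ x e : ℝ)) * s)
      (‖e‖ ^ 2 * (2 * s) + 2 * (inner ℝ x e : ℝ)) s := by
    intro s
    have h1 : HasDerivAt (fun s : ℝ => s ^ 2) (2 * s) s := by
      simpa using hasDerivAt_pow 2 s
    have h2 := ((h1.const_mul (‖e‖ ^ 2)).const_add (‖x‖ ^ 2)).add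
      ((hasDerivAt_id s).const_mul (2 * (inner ℝ x e : ℝ)))
    exact h2.congr_deriv (by simp)
  have hderiv1 : deriv (fun s : ℝ => ‖x + s • e‖ ^ 2)
      = fun s => ‖e‖ ^ 2 * (2 * s) + 2 * (inner ℝ x e : ℝ) := by
    funext s; rw [hfun]; exact (H1 s).deriv
  rw [hderiv1]
  have H2 : HasDerivAt (fun s : ℝ => ‖e‖ ^ 2 * (2 * s) + 2 * (inner ℝ x e : ℝ)) (‖e‖ ^ 2 * 2) (0:ℝ) := by
    have := ((hasDerivAt_id (0:ℝ)).const_mul (2:ℝ)).const_mul (‖e‖ ^ 2)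
    simpa [mul_comm, mul_assoc] using this.add_const (2 * (inner ℝ x e : ℝ))
  rw [H2.deriv]; ring

end AuxLemmas

set_option maxHeartbeats 2000000 in
/-- Let `N ≥ 2` be even. There is a constant `M`, depending only on `N`
and a bound `B` on `max_i ‖aᵢ‖_∞`, such that every smooth global solution of the PDE which
is bounded on each slab `[-T,T] × ℝⁿ` satisfies `u ≤ M` on all of `ℝ^{n+1}` (bounded from
above). -/
theorem even_degree_solutions_bounded_above
    {N : ℕ} (hN : 2 ≤ N) (heven : Even N) (B : ℝ) :
    ∃ M : ℝ, ∀ n : ℕ, 1 ≤ n →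
      ∀ a : Fin N → Spc n → ℝ, GoodCoeffs a → (∀ i x, |a i x| ≤ B) →
      ∀ u : ℝ × Spc n → ℝ, ContDiff ℝ (⊤ : ℕ∞) u → IsSol a u →
      (∀ T > (0 : ℝ), ∃ C : ℝ, ∀ (t : ℝ) (x : Spc n), |t| ≤ T → |u (t, x)| ≤ C) →
      ∀ p : ℝ × Spc n, u p ≤ M := by
  classical
  set B₀ : ℝ := max B 0 with hB₀def
  have hB₀0 : (0:ℝ) ≤ B₀ := le_max_right _ _
  set M₀ : ℝ := 2 * N * B₀ + 2 with hM₀def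
  have hM₀2 : (2:ℝ) ≤ M₀ := by
    have : (0:ℝ) ≤ 2 * N * B₀ := by positivity
    linarith
  have hM₀0 : (0:ℝ) ≤ M₀ := by linarith
  refine ⟨M₀ + 2, ?_⟩
  intro n hn a hgood haB u hu hsol hslab p
  obtain ⟨t₀, x₀⟩ := p
  obtain ⟨C, hC⟩ := hslab (|t₀| + 1) (by positivity)
  set C₁ : ℝ := max C 0 with hC₁def
  have hC₁0 : (0:ℝ) ≤ C₁ := le_max_right _ _
  have hC₁ : ∀ t x, |t| ≤ |t₀| + 1 → |u (t, x)| ≤ C₁ :=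
    fun t x ht => (hC t x ht).trans (le_max_left _ _)
  have key : ∀ δ : ℝ, 0 < δ → δ ≤ 1 / (2 * n + 2) →
      u (t₀, x₀) ≤ M₀ + 2 + δ * (1 + ‖x₀‖ ^ 2) := by
    intro δ hδ hδ'
    by_contra hcon
    push_neg at hcon
    set t₁ : ℝ := t₀ - 1 with ht₁def
    set δ₀ : ℝ := min (1/2) (1 / (C₁ + 1)) with hδ₀def
    have hδ₀pos : 0 < δ₀ := lt_min (by norm_num) (by positivity)
    have hδ₀half : δ₀ ≤ 1/2 := min_le_left _ _
    have hδ₀C : C₁ + 1 ≤ 1 / δ₀ := by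
      have h1 : δ₀ ≤ 1 / (C₁ + 1) := min_le_right _ _
      rw [le_div_iff₀ hδ₀pos]
      calc (C₁ + 1) * δ₀ ≤ (C₁ + 1) * (1 / (C₁ + 1)) :=
            mul_le_mul_of_nonneg_left h1 (by positivity)
        _ = 1 := by field_simp
    set s₁ : ℝ := t₁ + δ₀ with hs₁def
    have hs₁t₀ : s₁ < t₀ := by rw [hs₁def, ht₁def]; linarith
    set v : ℝ → ℝ := fun t => M₀ + 2 * (t - t₁)⁻¹ with hvdef
    set g : ℝ × Spc n → ℝ := fun q => u q - v q.1 - δ * (1 + ‖q.2‖ ^ 2) with hgdef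
    have hvt₀ : v t₀ = M₀ + 2 := by
      show M₀ + 2 * (t₀ - t₁)⁻¹ = M₀ + 2
      rw [ht₁def]; norm_num
    have hg0 : g (t₀, x₀) = u (t₀, x₀) - v t₀ - δ * (1 + ‖x₀‖ ^ 2) := rfl
    have hσpos : 0 < g (t₀, x₀) := by rw [hg0, hvt₀]; linarith
    set σ₀ : ℝ := g (t₀, x₀) with hσdef
    set R : ℝ := ‖x₀‖ + Real.sqrt (C₁ / δ) + 1 with hRdef
    have hsq : 0 ≤ Real.sqrt (C₁ / δ) := Real.sqrt_nonneg _
    have hx₀R : ‖x₀‖ ≤ R := by rw [hRdef]; linarith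
    have hR0 : 0 ≤ R := le_trans (norm_nonneg _) hx₀R
    have hRsq : C₁ + δ ≤ δ * R ^ 2 := by
      have h1 : Real.sqrt (C₁ / δ) + 1 ≤ R := by rw [hRdef]; linarith [norm_nonneg x₀]
      have h2 : (Real.sqrt (C₁ / δ) + 1) ^ 2 ≤ R ^ 2 := by
        apply pow_le_pow_left₀ (by positivity) h1
      have h3 : C₁ / δ + 1 ≤ (Real.sqrt (C₁ / δ) + 1) ^ 2 := by
        have h4 := Real.sq_sqrt (by positivity : (0:ℝ) ≤ C₁ / δ)
        nlinarith [hsq]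
      have h4 : C₁ / δ + 1 ≤ R ^ 2 := le_trans h3 h2
      calc C₁ + δ = δ * (C₁ / δ + 1) := by field_simp
        _ ≤ δ * R ^ 2 := mul_le_mul_of_nonneg_left h4 hδ.le
    set K : Set (ℝ × Spc n) := Set.Icc s₁ t₀ ×ˢ Metric.closedBall (0 : Spc n) R with hKdef
    have hKc : IsCompact K := isCompact_Icc.prod (isCompact_closedBall _ _)
    have hmemp : (t₀, x₀) ∈ K := by
      refine ⟨⟨hs₁t₀.le, le_refl _⟩, ?_⟩
      simpa [Metric.mem_closedBall, dist_eq_norm] using hx₀R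
    have hKne : K.Nonempty := ⟨(t₀, x₀), hmemp⟩
    have htK : ∀ t, t ∈ Set.Icc s₁ t₀ → |t| ≤ |t₀| + 1 := by
      intro t ht
      rw [abs_le]
      constructor
      · have h1 : -|t₀| ≤ t₀ := neg_abs_le t₀
        have h2 : s₁ ≤ t := ht.1
        rw [hs₁def, ht₁def] at h2
        linarith [hδ₀pos]
      · have h1 : t₀ ≤ |t₀| := le_abs_self t₀
        linarith [ht.2]
    have huK : ∀ t (x : Spc n), t ∈ Set.Icc s₁ t₀ → |u (t, x)| ≤ C₁ :=
      fun t x ht => hC₁ t x (htK t ht)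
    have hvK : ∀ t, t ∈ Set.Icc s₁ t₀ → M₀ ≤ v t ∧ δ₀ ≤ t - t₁ := by
      intro t ht
      have h1 : δ₀ ≤ t - t₁ := by
        have h2 := ht.1; rw [hs₁def] at h2; linarith
      have h2 : 0 < t - t₁ := lt_of_lt_of_le hδ₀pos h1
      refine ⟨?_, h1⟩
      show M₀ ≤ M₀ + 2 * (t - t₁)⁻¹
      have h3 : (0:ℝ) ≤ 2 * (t - t₁)⁻¹ := by positivity
      linarith
    have hgc : ContinuousOn g K := by
      apply ContinuousOn.sub
      apply ContinuousOn.sub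
      · exact hu.continuous.continuousOn
      · apply ContinuousOn.add continuousOn_const
        apply ContinuousOn.mul continuousOn_const
        apply ContinuousOn.inv₀
        · exact (continuous_fst.sub continuous_const).continuousOn
        · intro q hq
          have h1 := (hvK q.1 hq.1).2
          have h2 : 0 < q.1 - t₁ := lt_of_lt_of_le hδ₀pos h1
          exact ne_of_gt h2
      · exact (continuous_const.mul (continuous_const.add
          (continuous_snd.norm.pow 2))).continuousOn
    obtain ⟨q, hqK, hqmax⟩ := hKc.exists_isMaxOn hKne hgc
    obtain ⟨t', x'⟩ := q
    have hmax : ∀ r ∈ K, g r ≤ g (t', x') := fun r hr => hqmax hr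
    have hσle : σ₀ ≤ g (t', x') := hmax _ hmemp
    have ht'Icc : t' ∈ Set.Icc s₁ t₀ := hqK.1
    have hx'R : ‖x'‖ ≤ R := by
      have h1 := hqK.2
      simpa [Metric.mem_closedBall, dist_eq_norm] using h1
    have hvt' : M₀ ≤ v t' := (hvK t' ht'Icc).1
    have ht'δ₀ : δ₀ ≤ t' - t₁ := (hvK t' ht'Icc).2
    have ht'pos : 0 < t' - t₁ := lt_of_lt_of_le hδ₀pos ht'δ₀
    have hgt'x' : g (t', x') = u (t', x') - v t' - δ * (1 + ‖x'‖ ^ 2) := rfl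
    have hx'lt : ‖x'‖ < R := by
      rcases lt_or_eq_of_le hx'R with h | h
      · exact h
      · exfalso
        have h2 : u (t', x') ≤ C₁ := le_trans (le_abs_self _) (huK t' x' ht'Icc)
        have h3 : δ * (1 + R ^ 2) = δ + δ * R ^ 2 := by ring
        have h4 : g (t', x') ≤ C₁ - M₀ - δ * (1 + R ^ 2) := by
          rw [hgt'x', h]; linarith
        linarith [hσle, hσpos, hRsq, hM₀0]
    have ht's₁ : s₁ < t' := by
      rcases lt_or_eq_of_le ht'Icc.1 with h | h
      · exact h
      · exfalso
        have hvs₁ : v s₁ = M₀ + 2 * δ₀⁻¹ := by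
          show M₀ + 2 * (s₁ - t₁)⁻¹ = M₀ + 2 * δ₀⁻¹
          rw [hs₁def]; ring_nf
        have h2 : u (s₁, x') ≤ C₁ := le_trans (le_abs_self _)
          (huK s₁ x' ⟨le_refl _, hs₁t₀.le⟩)
        have h5 : (1:ℝ) / δ₀ ≤ 2 * δ₀⁻¹ := by
          rw [one_div]
          have := inv_pos.2 hδ₀pos
          linarith
        have h6 : g (s₁, x') < 0 := by
          have hgs : g (s₁, x') = u (s₁, x') - v s₁ - δ * (1 + ‖x'‖ ^ 2) := rfl
          have h7 : (0:ℝ) ≤ δ * (1 + ‖x'‖ ^ 2) := by positivity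
          rw [hgs, hvs₁]
          linarith [hδ₀C]
        rw [← h] at hσle
        linarith
    -- spatial local max and Laplacian bound
    set ut : Spc n → ℝ := fun y => u (t', y) with hutdef
    have hutsm : ContDiff ℝ (⊤ : ℕ∞) ut := hu.comp (contDiff_const.prodMk contDiff_id)
    set G : Spc n → ℝ := fun y => ut y - δ * (1 + ‖y‖ ^ 2) with hGdef
    have hGsm : ContDiff ℝ (⊤ : ℕ∞) G :=
      hutsm.sub (contDiff_const.mul (contDiff_const.add aux_normsq_contDiff))
    have hGmax : IsLocalMax G x' := by
      have hball : Metric.ball x' (R - ‖x'‖) ∈ 𝓝 x' :=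
        Metric.ball_mem_nhds _ (by linarith)
      filter_upwards [hball] with y hy
      have hdy : ‖y - x'‖ < R - ‖x'‖ := by
        rw [← dist_eq_norm]; exact hy
      have hyR : ‖y‖ ≤ R := by
        have h1 : ‖y‖ ≤ ‖x'‖ + ‖y - x'‖ := by
          have hxy : x' + (y - x') = y := by abel
          calc ‖y‖ = ‖x' + (y - x')‖ := by rw [hxy]
            _ ≤ ‖x'‖ + ‖y - x'‖ := norm_add_le _ _
        linarith
      have hmem : (t', y) ∈ K := ⟨ht'Icc, by
        simpa [Metric.mem_closedBall, dist_eq_norm] using hyR⟩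
      have h1 := hmax _ hmem
      have hgy : g (t', y) = G y - v t' := by
        show u (t', y) - v t' - δ * (1 + ‖y‖ ^ 2) = (ut y - δ * (1 + ‖y‖ ^ 2)) - v t'
        rw [hutdef]; ring
      have hgx : g (t', x') = G x' - v t' := by
        show u (t', x') - v t' - δ * (1 + ‖x'‖ ^ 2) = (ut x' - δ * (1 + ‖x'‖ ^ 2)) - v t'
        rw [hutdef]; ring
      rw [hgy, hgx] at h1
      simpa using h1
    have hlap : lap ut x' ≤ 2 * n * δ := by
      have hper : ∀ i : Fin n,
          fderiv ℝ (fun y => fderiv ℝ ut y (EuclideanSpace.single i 1)) x'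
            (EuclideanSpace.single i 1) ≤ 2 * δ := by
        intro i
        set e : Spc n := EuclideanSpace.single i 1 with hedef
        have hnorme : ‖e‖ = 1 := by
          rw [hedef, EuclideanSpace.norm_single]; norm_num
        set q2 : Spc n → ℝ := fun z => ‖z‖ ^ 2 with hq2def
        have hq2sm : ContDiff ℝ (⊤ : ℕ∞) q2 := aux_normsq_contDiff
        have hq2d : Differentiable ℝ q2 := hq2sm.differentiable (by simp)
        have hutd : Differentiable ℝ ut := hutsm.differentiable (by simp)
        have hstep1 : (fun y => fderiv ℝ G y e)
            = fun y => fderiv ℝ ut y e - δ * fderiv ℝ q2 y e := by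
          funext y
          have h1 : fderiv ℝ G y = fderiv ℝ ut y - δ • fderiv ℝ q2 y := by
            have hG' : G = fun z => ut z - δ * (1 + q2 z) := rfl
            rw [hG', fderiv_fun_sub (hutd y) (((hq2d y).const_add 1).const_mul δ),
              fderiv_const_mul ((hq2d y).const_add 1) δ, fderiv_const_add]
          rw [h1]
          simp [ContinuousLinearMap.sub_apply, ContinuousLinearMap.smul_apply, smul_eq_mul]
        have hA : Differentiable ℝ (fun y => fderiv ℝ ut y e) :=
          aux_diff_fderiv_apply ut hutsm e
        have hAq : Differentiable ℝ (fun y => fderiv ℝ q2 y e) :=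
          aux_diff_fderiv_apply q2 hq2sm e
        have hstep2 : fderiv ℝ (fun y => fderiv ℝ G y e) x' e
            = fderiv ℝ (fun y => fderiv ℝ ut y e) x' e
              - δ * fderiv ℝ (fun y => fderiv ℝ q2 y e) x' e := by
          rw [hstep1, fderiv_fun_sub (hA x') ((hAq x').const_mul δ),
            fderiv_const_mul (hAq x') δ]
          simp [ContinuousLinearMap.sub_apply, ContinuousLinearMap.smul_apply, smul_eq_mul]
        have hneg := aux_secondDir_nonpos hGsm e hGmax
        rw [hstep2] at hneg
        have hqq : fderiv ℝ (fun y => fderiv ℝ q2 y e) x' e = 2 * ‖e‖ ^ 2 :=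
          aux_normsq_second x' e
        rw [hqq, hnorme] at hneg
        norm_num at hneg
        linarith
      calc lap ut x' ≤ ∑ _i : Fin n, 2 * δ := Finset.sum_le_sum (fun i _ => hper i)
        _ = n * (2 * δ) := by
          rw [Finset.sum_const, Finset.card_univ, Fintype.card_fin, nsmul_eq_mul]
        _ = 2 * n * δ := by ring
    -- time derivative bound
    set Dt : ℝ := timeDeriv u t' x' with hDtdef
    have hDt : HasDerivAt (fun t => u (t, x')) Dt t' := by
      have hdiff : DifferentiableAt ℝ (fun t : ℝ => u (t, x')) t' := by
        have h1 : DifferentiableAt ℝ u (t', x') := (hu.differentiable (by simp)) _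
        exact h1.comp t' (differentiableAt_fun_id.prodMk (differentiableAt_const _))
      simpa [hDtdef, timeDeriv] using hdiff.hasDerivAt
    have hvd : HasDerivAt v (2 * (-1 / (t' - t₁) ^ 2)) t' := by
      have h1 : HasDerivAt (fun t : ℝ => t - t₁) 1 t' := (hasDerivAt_id t').sub_const t₁
      have h2 := h1.inv (ne_of_gt ht'pos)
      have h3 := (h2.const_mul (2:ℝ)).const_add M₀
      simpa [hvdef] using h3
    set f : ℝ → ℝ := fun t => u (t, x') - v t - δ * (1 + ‖x'‖ ^ 2) with hfdef
    have hfd : HasDerivAt f (Dt - 2 * (-1 / (t' - t₁) ^ 2)) t' := (hDt.sub hvd).sub_const _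
    have hf0 : 0 ≤ Dt - 2 * (-1 / (t' - t₁) ^ 2) := by
      rw [← hfd.deriv]
      apply aux_deriv_nonneg_right ht's₁ hfd.differentiableAt
      intro t ht
      have hmem : (t, x') ∈ K := ⟨⟨ht.1, le_trans ht.2 ht'Icc.2⟩, by
        simpa [Metric.mem_closedBall, dist_eq_norm] using hx'R⟩
      exact hmax _ hmem
    -- the PDE at (t', x')
    have heq : timeDeriv u t' x' = lap ut x' + Pfun a ut x' := hsol t' x'
    set s : ℝ := ut x' with hsdef
    have hsv : v t' + δ * (1 + ‖x'‖ ^ 2) + σ₀ ≤ s := by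
      have h1 : g (t', x') = s - v t' - δ * (1 + ‖x'‖ ^ 2) := rfl
      linarith [hσle]
    have hδx' : (0:ℝ) ≤ δ * (1 + ‖x'‖ ^ 2) := by positivity
    have hsM₀ : M₀ ≤ s := by linarith [hσpos, hvt']
    have hs1 : (1:ℝ) ≤ s := by linarith
    have hs0 : (0:ℝ) ≤ s := by linarith
    have hsA : 2 * (t' - t₁)⁻¹ ≤ s := by
      have h2 : v t' = M₀ + 2 * (t' - t₁)⁻¹ := rfl
      have h3 := hsv
      rw [h2] at h3
      linarith [h3, hσpos, hδx', hM₀0]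
    -- polynomial bounds
    have hP : Pfun a ut x' ≤ -s ^ N + N * B₀ * s ^ (N - 1) := by
      have hsum : ∑ i : Fin N, a i x' * ut x' ^ (i : ℕ) ≤ N * B₀ * s ^ (N - 1) := by
        have hbound : ∀ i : Fin N, a i x' * ut x' ^ (i : ℕ) ≤ B₀ * s ^ (N - 1) := by
          intro i
          have h1 : a i x' ≤ B₀ := le_trans (le_trans (le_abs_self _) (haB i x'))
            (le_max_left _ _)
          have h2 : ut x' ^ (i : ℕ) ≤ s ^ (N - 1) := by
            rw [← hsdef]
            exact pow_le_pow_right₀ hs1 (by omega)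
          have h3 : (0:ℝ) ≤ ut x' ^ (i : ℕ) := by
            rw [← hsdef]; positivity
          calc a i x' * ut x' ^ (i : ℕ) ≤ B₀ * ut x' ^ (i : ℕ) :=
                mul_le_mul_of_nonneg_right h1 h3
            _ ≤ B₀ * s ^ (N - 1) := mul_le_mul_of_nonneg_left h2 hB₀0
        calc ∑ i : Fin N, a i x' * ut x' ^ (i : ℕ)
            ≤ ∑ _i : Fin N, B₀ * s ^ (N - 1) := Finset.sum_le_sum (fun i _ => hbound i)
          _ = N * (B₀ * s ^ (N - 1)) := by
              rw [Finset.sum_const, Finset.card_univ, Fintype.card_fin, nsmul_eq_mul]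
          _ = N * B₀ * s ^ (N - 1) := by ring
      have h4 : Pfun a ut x' = -s ^ N + ∑ i : Fin N, a i x' * ut x' ^ (i : ℕ) := rfl
      linarith
    have hNBs : N * B₀ * s ^ (N - 1) + s ≤ s ^ N / 2 := by
      have hpow : s ^ N = s ^ (N - 1) * s := by
        conv_lhs => rw [show N = (N - 1) + 1 by omega]
        rw [pow_succ]
      have h1 : s ≤ s ^ (N - 1) := by
        calc s = s ^ 1 := (pow_one s).symm
          _ ≤ s ^ (N - 1) := pow_le_pow_right₀ hs1 (by omega)
      have h2 : (N:ℝ) * B₀ + 1 ≤ s / 2 := by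
        rw [hM₀def] at hsM₀; linarith
      have h3 : (0:ℝ) ≤ s ^ (N - 1) := by positivity
      calc (N:ℝ) * B₀ * s ^ (N - 1) + s ≤ N * B₀ * s ^ (N - 1) + s ^ (N - 1) := by linarith
        _ = ((N:ℝ) * B₀ + 1) * s ^ (N - 1) := by ring
        _ ≤ (s / 2) * s ^ (N - 1) := mul_le_mul_of_nonneg_right h2 h3
        _ = s ^ N / 2 := by rw [hpow]; ring
    -- s^N / 2 dominates the barrier derivative
    have hsN2 : 2 * ((t' - t₁)⁻¹) ^ 2 ≤ s ^ N / 2 := by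
      have h1 : s ^ 2 ≤ s ^ N := pow_le_pow_right₀ hs1 hN
      have h2 : (2 * (t' - t₁)⁻¹) ^ 2 ≤ s ^ 2 := by
        apply pow_le_pow_left₀ (by positivity) hsA
      have h3 : (2 * (t' - t₁)⁻¹) ^ 2 = 4 * ((t' - t₁)⁻¹) ^ 2 := by ring
      linarith
    -- combine everything
    have hinv2 : (-1 / (t' - t₁) ^ 2) = -((t' - t₁)⁻¹) ^ 2 := by
      rw [inv_pow]
      field_simp
    have hDtlow : -(2 * ((t' - t₁)⁻¹) ^ 2) ≤ Dt := by
      rw [hinv2] at hf0; linarith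
    have hDthigh : Dt ≤ 2 * n * δ + (-s ^ N + N * B₀ * s ^ (N - 1)) := by
      rw [hDtdef, heq]; linarith [hlap, hP]
    have hfinal : s ≤ 2 * n * δ := by linarith [hDtlow, hDthigh, hNBs, hsN2]
    have hsmall : 2 * (n:ℝ) * δ < 1 := by
      have h1 : (0:ℝ) < 2 * n + 2 := by positivity
      have h2 : 2 * (n:ℝ) * δ ≤ 2 * n * (1 / (2 * n + 2)) := by
        apply mul_le_mul_of_nonneg_left hδ' (by positivity)
      have h3 : 2 * (n:ℝ) * (1 / (2 * n + 2)) < 1 := by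
        rw [mul_one_div, div_lt_one h1]; linarith
      linarith
    linarith
  -- conclude from key
  by_contra hfin
  push_neg at hfin
  set ε : ℝ := u (t₀, x₀) - (M₀ + 2) with hεdef
  have hεpos : 0 < ε := by rw [hεdef]; linarith
  have hx₀sq : (0:ℝ) < 1 + ‖x₀‖ ^ 2 := by positivity
  set δ : ℝ := min (1 / (2 * n + 2)) (ε / (2 * (1 + ‖x₀‖ ^ 2))) with hδdef
  have hδpos : 0 < δ := lt_min (by positivity) (by positivity)
  have hδsmall : δ ≤ 1 / (2 * n + 2) := min_le_left _ _
  have h1 := key δ hδpos hδsmall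
  have h2 : δ * (1 + ‖x₀‖ ^ 2) ≤ ε / 2 := by
    have h3 : δ ≤ ε / (2 * (1 + ‖x₀‖ ^ 2)) := min_le_right _ _
    calc δ * (1 + ‖x₀‖ ^ 2) ≤ ε / (2 * (1 + ‖x₀‖ ^ 2)) * (1 + ‖x₀‖ ^ 2) :=
          mul_le_mul_of_nonneg_right h3 hx₀sq.le
      _ = ε / 2 := by field_simp
  linarith


end
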